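/- Let Θ be a nonempty finite set, θ* ∈ Θ, m ≥ 1, n ≥ 1, r ≥ 0 integers, φ ≥ 0, c ≥ 1, δ ≥ 0. Let π : Θ → ℝ>0 satisfy π(θ₁)/π(θ₂) ≤ c for all θ₁, θ₂; let g₀, …, g_m : Θ → ℝ≥0 with g_i(θ*) > 0; and let w : Θ → ℝ≥0 satisfy w(θ) ≤ e^{nmφ} π(θ) Π_{i=0}^m g_i(θ) for all θ and w(θ*) ≥ e^{−nmφ} π(θ*) Π_{i=0}^m g_i(θ*) > 0. Set W := Σ_θ w(θ). Let f : Θ → [0,1] (the prompt-conditional response probabilities), let g ∈ [0,1] (the target task-conditional response probability) with |f(θ*) − g| ≤ e^{rφ} − 1, and let p̂ ∈ ℝ satisfy |p̂ − Σ_θ (w(θ)/W) f(θ)| ≤ δ. Then |p̂ − g| ≤ δ + (e^{rφ} − 1) + e^{2nmφ} c^m Π_{i=0}^{m} [ ( Σ_{θ ≠ θ*} π(θ) g_i(θ) ) / ( π(θ*) g_i(θ*) ) ]. This is the population-level form of the In-Context Learning theorem: the model's prediction differs from the target task distribution by the pretraining error δ, the nearly-Markov distortion e^{rφ} − 1, and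 an ambiguity term that decays multiplicatively in the number m of demonstrations. -/

import Mathlib

open Finset

/-- Population-level In-Context Learning theorem: the model's
prediction `phat` differs from the target task-conditional response probability `g` by at
most the pretraining error `δ`, the nearly-Markov distortion `e^{rφ} - 1`, and an
ambiguity term `e^{2nmφ} c^m ∏ᵢ (odds against θ*)` that decays multiplicatively in the
number `m` of demonstrations. -/
theorem icl_prediction_error_bound {Θ : Type*} [Fintype Θ] [DecidableEq Θ] (θs : Θ)
    (m n r : ℕ) (hm : 1 ≤ m) (hn : 1 ≤ n) (φ c δ : ℝ)
    (hφ : 0 ≤ φ) (hc : 1 ≤ c) (hδ : 0 ≤ δ)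
    (π : Θ → ℝ) (hπ : ∀ θ, 0 < π θ) (hratio : ∀ θ₁ θ₂, π θ₁ / π θ₂ ≤ c)
    (g : Fin (m + 1) → Θ → ℝ) (hg0 : ∀ i θ, 0 ≤ g i θ) (hgs : ∀ i, 0 < g i θs)
    (w : Θ → ℝ) (hw0 : ∀ θ, 0 ≤ w θ)
    (hwub : ∀ θ, w θ ≤ Real.exp ((n : ℝ) * m * φ) * π θ * ∏ i, g i θ)
    (hwlb : Real.exp (-((n : ℝ) * m * φ)) * π θs * ∏ i, g i θs ≤ w θs)
    (hws : 0 < w θs)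
    (f : Θ → ℝ) (hf : ∀ θ, 0 ≤ f θ ∧ f θ ≤ 1)
    (gtar : ℝ) (hgtar : 0 ≤ gtar ∧ gtar ≤ 1)
    (hclose : |f θs - gtar| ≤ Real.exp ((r : ℝ) * φ) - 1)
    (phat : ℝ)
    (hphat : |phat - ∑ θ, (w θ / ∑ θ', w θ') * f θ| ≤ δ) :
    |phat - gtar| ≤ δ + (Real.exp ((r : ℝ) * φ) - 1) +
      Real.exp (2 * (n : ℝ) * m * φ) * c ^ m *
        ∏ i, (∑ θ ∈ univ.erase θs, π θ * g i θ) / (π θs * g i θs) := by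
  have hπs := hπ θs
  set W := ∑ θ', w θ' with hWdef
  have hWle : w θs ≤ W := Finset.single_le_sum (fun θ _ => hw0 θ) (mem_univ θs)
  have hWpos : 0 < W := lt_of_lt_of_le hws hWle
  set a : Fin (m + 1) → Θ → ℝ := fun i θ => (π θ * g i θ) / (π θs * g i θs) with ha
  have hden : ∀ i : Fin (m + 1), 0 < π θs * g i θs := fun i =>
    mul_pos hπs (hgs i)
  have ha0 : ∀ (i : Fin (m + 1)) θ, 0 ≤ a i θ := fun i θ =>
    div_nonneg (mul_nonneg (hπ θ).le (hg0 i θ)) (hden i).le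
  set S : Fin (m + 1) → ℝ := fun i => ∑ θ ∈ univ.erase θs, a i θ with hS
  have hS0 : ∀ i, 0 ≤ S i := fun i => Finset.sum_nonneg fun θ _ => ha0 i θ
  -- rewrite the product in the goal as ∏ S i
  have hprodS : (∏ i, (∑ θ ∈ univ.erase θs, π θ * g i θ) / (π θs * g i θs)) = ∏ i, S i := by
    refine Finset.prod_congr rfl fun i _ => ?_
    rw [hS, ha, Finset.sum_div]
  -- Step 1: |P - f θs| ≤ ∑_{θ≠θs} w θ / W
  have hsum1 : ∑ θ, w θ / W = 1 := by
    rw [← Finset.sum_div, ← hWdef, div_self hWpos.ne']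
  have h1 : |(∑ θ, (w θ / W) * f θ) - f θs| ≤ ∑ θ ∈ univ.erase θs, w θ / W := by
    have hrw : (∑ θ, (w θ / W) * f θ) - f θs
        = ∑ θ ∈ univ.erase θs, (w θ / W) * (f θ - f θs) := by
      have h0 : ∑ θ ∈ univ.erase θs, (w θ / W) * (f θ - f θs)
          = ∑ θ, (w θ / W) * (f θ - f θs) :=
        Finset.sum_erase univ (by ring)
      rw [h0]
      simp only [mul_sub]
      rw [Finset.sum_sub_distrib, ← Finset.sum_mul, hsum1, one_mul]
    rw [hrw]
    refine (Finset.abs_sum_le_sum_abs _ _).trans (Finset.sum_le_sum fun θ _ => ?_)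
    rw [abs_mul, abs_of_nonneg (div_nonneg (hw0 θ) hWpos.le)]
    have hfb : |f θ - f θs| ≤ 1 := by
      rw [abs_le]
      constructor <;> nlinarith [(hf θ).1, (hf θ).2, (hf θs).1, (hf θs).2]
    calc w θ / W * |f θ - f θs| ≤ w θ / W * 1 :=
          mul_le_mul_of_nonneg_left hfb (div_nonneg (hw0 θ) hWpos.le)
      _ = w θ / W := mul_one _
  -- Step 2: w θ / W ≤ w θ / w θs
  have h2 : ∀ θ, w θ / W ≤ w θ / w θs := fun θ =>
    div_le_div_of_nonneg_left (hw0 θ) hws hWle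
  -- Step 3: w θ / w θs ≤ e^{2nmφ} * (π θ * ∏ g) / (π θs * ∏ g θs)
  have hprodgpos : 0 < ∏ i, g i θs := Finset.prod_pos fun i _ => hgs i
  have h3 : ∀ θ, w θ / w θs ≤
      Real.exp (2 * (n : ℝ) * m * φ) * ((π θ * ∏ i, g i θ) / (π θs * ∏ i, g i θs)) := by
    intro θ
    have hdpos : 0 < Real.exp (-((n : ℝ) * m * φ)) * π θs * ∏ i, g i θs :=
      mul_pos (mul_pos (Real.exp_pos _) hπs) hprodgpos
    have hnum : 0 ≤ Real.exp ((n : ℝ) * m * φ) * π θ * ∏ i, g i θ :=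
      mul_nonneg (mul_nonneg (Real.exp_pos _).le (hπ θ).le)
        (Finset.prod_nonneg fun i _ => hg0 i θ)
    have hd := div_le_div₀ hnum (hwub θ) hdpos hwlb
    refine hd.trans_eq ?_
    rw [Real.exp_neg]
    have hx : Real.exp (2 * (n : ℝ) * m * φ)
        = Real.exp ((n : ℝ) * m * φ) * Real.exp ((n : ℝ) * m * φ) := by
      rw [← Real.exp_add]; ring_nf
    rw [hx]
    field_simp
  -- Step 4: pointwise bound by c^m * ∏ a i θ
  have h4 : ∀ θ, (π θ * ∏ i, g i θ) / (π θs * ∏ i, g i θs) ≤ c ^ m * ∏ i, a i θ := by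
    intro θ
    have hπθ := hπ θ
    have hBnn : 0 ≤ (∏ i, g i θ) / ∏ i, g i θs :=
      div_nonneg (Finset.prod_nonneg fun i _ => hg0 i θ) hprodgpos.le
    have hlhs : (π θ * ∏ i, g i θ) / (π θs * ∏ i, g i θs)
        = (π θ / π θs) * ((∏ i, g i θ) / ∏ i, g i θs) := mul_div_mul_comm _ _ _ _
    have hrhs : (∏ i, a i θ)
        = (π θ / π θs) ^ (m + 1) * ((∏ i, g i θ) / ∏ i, g i θs) := by
      rw [ha]
      simp only [mul_div_mul_comm]
      rw [Finset.prod_mul_distrib, Finset.prod_const, Finset.card_univ, Fintype.card_fin,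
        Finset.prod_div_distrib]
    have hq1 : 1 ≤ c * (π θ / π θs) := by
      have h := mul_le_mul_of_nonneg_right (hratio θs θ)
        (div_nonneg hπθ.le hπs.le)
      calc (1 : ℝ) = (π θs / π θ) * (π θ / π θs) := by field_simp
        _ ≤ c * (π θ / π θs) := h
    rw [hlhs, hrhs]
    have hkey : c ^ m * ((π θ / π θs) ^ (m + 1) * ((∏ i, g i θ) / ∏ i, g i θs))
        = (c * (π θ / π θs)) ^ m * ((π θ / π θs) * ((∏ i, g i θ) / ∏ i, g i θs)) := by
      ring
    rw [hkey]
    exact le_mul_of_one_le_left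
      (mul_nonneg (div_nonneg hπθ.le hπs.le) hBnn) (one_le_pow₀ hq1)
  -- Step 5: ∑_{θ≠θs} ∏ a ≤ ∏ S
  have h5 : (∑ θ ∈ univ.erase θs, ∏ i, a i θ) ≤ ∏ i, S i := by
    have hstep : ∀ θ ∈ univ.erase θs, (∏ i, a i θ) ≤ a 0 θ * ∏ i : Fin m, S i.succ := by
      intro θ hθ
      rw [Fin.prod_univ_succ]
      refine mul_le_mul_of_nonneg_left (Finset.prod_le_prod (fun i _ => ha0 _ θ)
        (fun i _ => Finset.single_le_sum (fun θ' _ => ha0 i.succ θ') hθ)) (ha0 0 θ)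
    calc (∑ θ ∈ univ.erase θs, ∏ i, a i θ)
        ≤ ∑ θ ∈ univ.erase θs, a 0 θ * ∏ i : Fin m, S i.succ :=
          Finset.sum_le_sum hstep
      _ = S 0 * ∏ i : Fin m, S i.succ := by rw [← Finset.sum_mul]
      _ = ∏ i, S i := (Fin.prod_univ_succ S).symm
  -- Assemble
  have hEexp : (0:ℝ) < Real.exp (2 * (n : ℝ) * m * φ) := Real.exp_pos _
  have hcm : (0:ℝ) ≤ c ^ m := pow_nonneg (by linarith) m
  have hmain : |(∑ θ, (w θ / W) * f θ) - f θs| ≤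
      Real.exp (2 * (n : ℝ) * m * φ) * c ^ m * ∏ i, S i := by
    calc |(∑ θ, (w θ / W) * f θ) - f θs|
        ≤ ∑ θ ∈ univ.erase θs, w θ / W := h1
      _ ≤ ∑ θ ∈ univ.erase θs, w θ / w θs := Finset.sum_le_sum fun θ _ => h2 θ
      _ ≤ ∑ θ ∈ univ.erase θs,
            Real.exp (2 * (n : ℝ) * m * φ) * ((π θ * ∏ i, g i θ) / (π θs * ∏ i, g i θs)) :=
          Finset.sum_le_sum fun θ _ => h3 θ
      _ ≤ ∑ θ ∈ univ.erase θs,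
            Real.exp (2 * (n : ℝ) * m * φ) * (c ^ m * ∏ i, a i θ) :=
          Finset.sum_le_sum fun θ _ =>
            mul_le_mul_of_nonneg_left (h4 θ) hEexp.le
      _ = Real.exp (2 * (n : ℝ) * m * φ) * c ^ m * ∑ θ ∈ univ.erase θs, ∏ i, a i θ := by
          simp only [← mul_assoc]
          rw [← Finset.mul_sum]
      _ ≤ Real.exp (2 * (n : ℝ) * m * φ) * c ^ m * ∏ i, S i :=
          mul_le_mul_of_nonneg_left h5 (mul_nonneg hEexp.le hcm)
  rw [hprodS]
  calc |phat - gtar|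
      = |(phat - ∑ θ, (w θ / W) * f θ) + ((∑ θ, (w θ / W) * f θ) - f θs) + (f θs - gtar)| := by
        congr 1; ring
    _ ≤ |phat - ∑ θ, (w θ / W) * f θ| + |(∑ θ, (w θ / W) * f θ) - f θs| + |f θs - gtar| :=
        (abs_add_le _ _).trans (add_le_add_left (abs_add_le _ _) _)
    _ ≤ δ + (Real.exp (2 * (n : ℝ) * m * φ) * c ^ m * ∏ i, S i) +
          (Real.exp ((r : ℝ) * φ) - 1) := add_le_add (add_le_add hphat hmain) hclose
    _ = δ + (Real.exp ((r : ℝ) * φ) - 1) +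
          Real.exp (2 * (n : ℝ) * m * φ) * c ^ m * ∏ i, S i := by ring
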